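/- For any subsingleton-generated virtual flat biquandle: the sub-virtual-flat-biquandle generated by a single element a consists exactly of the elements {T_a^n(a), S_a^n(a) : n ≥ 0} = {a} ∪ {a∘a∘⋯∘a} ∪ {a*a*⋯*a}; that is, the closure of {a} under the two operations equals the set of iterates of S_a and T_a applied to a. -/
import Mathlib


/-- A virtual flat biquandle: a set with two binary operations
`star a b = S_b(a)` and `circ a b = T_b(a)` satisfying
(i) `S_a S_b = S_b S_a`, `T_a T_b = T_b T_a`, `S_a T_b = T_b S_a`;
(ii) `S_a = S_{T_b(a)} = S_{S_b(a)}`, `T_a = T_{S_b(a)} = T_{T_b(a)}`;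
(iii) `T_a S_a = S_a T_a = id`. -/
structure VFB (S : Type*) where
  star : S → S → S
  circ : S → S → S
  star_star_comm : ∀ a b x, star (star x b) a = star (star x a) b
  circ_circ_comm : ∀ a b x, circ (circ x b) a = circ (circ x a) b
  star_circ_comm : ∀ a b x, star (circ x b) a = circ (star x a) b
  star_circ_invar : ∀ a b x, star x (circ a b) = star x a
  star_star_invar : ∀ a b x, star x (star a b) = star x a
  circ_star_invar : ∀ a b x, circ x (star a b) = circ x a
  circ_circ_invar : ∀ a b x, circ x (circ a b) = circ x a
  circ_star : ∀ a x, circ (star x a) a = x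
  star_circ : ∀ a x, star (circ x a) a = x

theorem stmt_18 {S : Type*} (V : VFB S) (a : S) :
    ⋂₀ {T : Set S | a ∈ T ∧
        ∀ x ∈ T, ∀ y ∈ T, V.star x y ∈ T ∧ V.circ x y ∈ T} =
      {x : S | ∃ n : ℕ,
        x = (fun z => V.star z a)^[n] a ∨ x = (fun z => V.circ z a)^[n] a} := by
  ext x
  simp only [Set.mem_sInter, Set.mem_setOf_eq]
  constructor
  · intro h
    apply h
    refine ⟨⟨0, Or.inl rfl⟩, ?_⟩
    rintro x ⟨n, hx⟩ y ⟨m, hy⟩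
    have hy' : V.star x y = V.star x a ∧ V.circ x y = V.circ x a := by
      induction m generalizing y with
      | zero =>
        rcases hy with h' | h' <;> subst h' <;> exact ⟨rfl, rfl⟩
      | succ m ih =>
        rcases hy with h' | h' <;> subst h' <;>
          rw [Function.iterate_succ_apply']
        · exact ⟨by rw [V.star_star_invar]; exact (ih _ (Or.inl rfl)).1,
            by rw [V.circ_star_invar]; exact (ih _ (Or.inl rfl)).2⟩
        · exact ⟨by rw [V.star_circ_invar]; exact (ih _ (Or.inr rfl)).1,
            by rw [V.circ_circ_invar]; exact (ih _ (Or.inr rfl)).2⟩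
    rw [hy'.1, hy'.2]
    rcases hx with h' | h' <;> subst h'
    · refine ⟨⟨n + 1, Or.inl (by rw [Function.iterate_succ_apply'])⟩, ?_⟩
      cases n with
      | zero => exact ⟨1, Or.inr rfl⟩
      | succ m =>
        refine ⟨m, Or.inl ?_⟩
        rw [Function.iterate_succ_apply']
        exact V.circ_star a _
    · refine ⟨?_, ⟨n + 1, Or.inr (by rw [Function.iterate_succ_apply'])⟩⟩
      cases n with
      | zero => exact ⟨1, Or.inl rfl⟩
      | succ m =>
        refine ⟨m, Or.inr ?_⟩
        rw [Function.iterate_succ_apply']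
        exact V.star_circ a _
  · rintro ⟨n, hx⟩ T ⟨haT, hcl⟩
    induction n generalizing x with
    | zero =>
      rcases hx with h' | h' <;> subst h' <;> exact haT
    | succ m ih =>
      rcases hx with h' | h' <;> subst h' <;> rw [Function.iterate_succ_apply']
      · exact (hcl _ (ih _ (Or.inl rfl)) _ haT).1
      · exact (hcl _ (ih _ (Or.inr rfl)) _ haT).2
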